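/- arXiv:2201.06414 — 2 statements merged into one kernel-verified Lean document; each statement's English description precedes it below -/
import Mathlib

section
/- Let θ and A be real 2×2 matrices with Aθ = θA, ε ∈ ℝ with ε² = 1, P an invertible real 2×2 matrix with Pθ = ε·θP, and ξ, η ∈ ℝ². Then for all t ∈ ℝ and v ∈ ℝ²: P·(P⁻¹AP·v + Λ^θ_t·P⁻¹(εξ + Aη)) = A·(Pv + ε·Λ^θ_{εt}η) + Λ^θ_{εt}ξ. (This identity expresses that the linear vector field on G(θ) determined by the pair (P⁻¹(εξ + Aη), P⁻¹AP) is mapped by the automorphism ψ(t,v) = (εt, Pv + ε·Λ^θ_{εt}η) onto the linear vector field determined by (ξ, A).) -/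
open Matrix

/-- The matrix exponential. -/
noncomputable def mexp (B : Matrix (Fin 2) (Fin 2) ℝ) : Matrix (Fin 2) (Fin 2) ℝ :=
  NormedSpace.exp B

/-- `Λ^B_t = ∫₀^t exp(sB) ds`, taken entrywise. -/
noncomputable def Lam (B : Matrix (Fin 2) (Fin 2) ℝ) (t : ℝ) : Matrix (Fin 2) (Fin 2) ℝ :=
  Matrix.of fun i j => ∫ s in (0:ℝ)..t, mexp (s • B) i j

lemma mexp_cont (θ : Matrix (Fin 2) (Fin 2) ℝ) (i j : Fin 2) :
    Continuous fun s : ℝ => mexp (s • θ) i j := by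
  letI : SeminormedRing (Matrix (Fin 2) (Fin 2) ℝ) := Matrix.linftyOpSemiNormedRing
  letI : NormedRing (Matrix (Fin 2) (Fin 2) ℝ) := Matrix.linftyOpNormedRing
  letI : NormedAlgebra ℝ (Matrix (Fin 2) (Fin 2) ℝ) := Matrix.linftyOpNormedAlgebra
  letI : NormedAlgebra ℚ (Matrix (Fin 2) (Fin 2) ℝ) := NormedAlgebra.restrictScalars ℚ ℝ _
  have h1 : Continuous fun s : ℝ => mexp (s • θ) := by
    unfold mexp
    exact NormedSpace.exp_continuous.comp (continuous_id.smul continuous_const)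
  exact ((continuous_apply j).comp (continuous_apply i)).comp h1

lemma mexp_intInt (θ : Matrix (Fin 2) (Fin 2) ℝ) (i j : Fin 2) (a b : ℝ) :
    IntervalIntegrable (fun s : ℝ => mexp (s • θ) i j) MeasureTheory.volume a b :=
  (mexp_cont θ i j).intervalIntegrable a b

lemma commute_mexp (θ A : Matrix (Fin 2) (Fin 2) ℝ) (hcomm : A * θ = θ * A) (s : ℝ) :
    A * mexp (s • θ) = mexp (s • θ) * A := by
  have h : Commute A θ := hcomm
  exact ((h.smul_right s).exp_right).eq

lemma lamA (θ A : Matrix (Fin 2) (Fin 2) ℝ) (hcomm : A * θ = θ * A) (u : ℝ) :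
    A * Lam θ u = Lam θ u * A := by
  ext i j
  simp only [Lam, Matrix.mul_apply, Matrix.of_apply]
  simp_rw [← intervalIntegral.integral_const_mul, ← intervalIntegral.integral_mul_const]
  rw [← intervalIntegral.integral_finset_sum (fun k _ =>
        ((mexp_intInt θ k j 0 u).const_mul _)),
      ← intervalIntegral.integral_finset_sum (fun k _ =>
        ((mexp_intInt θ i k 0 u).mul_const _))]
  congr 1
  ext s
  have := commute_mexp θ A hcomm s
  have hh : (A * mexp (s • θ)) i j = (mexp (s • θ) * A) i j := by rw [this]
  simpa [Matrix.mul_apply] using hh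

lemma mexp_conj (θ P : Matrix (Fin 2) (Fin 2) ℝ) (hP : IsUnit P) (ε : ℝ)
    (hPθ : P * θ = ε • (θ * P)) (s : ℝ) :
    P * mexp (s • θ) = mexp ((ε * s) • θ) * P := by
  have hdet := (Matrix.isUnit_iff_isUnit_det P).mp hP
  have hPinv : P * P⁻¹ = 1 := Matrix.mul_nonsing_inv P hdet
  have hPinv' : P⁻¹ * P = 1 := Matrix.nonsing_inv_mul P hdet
  have h1 : (ε * s) • θ = P * (s • θ) * P⁻¹ := by
    rw [Matrix.mul_smul, Matrix.smul_mul, hPθ, Matrix.smul_mul, Matrix.mul_assoc, hPinv,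
      Matrix.mul_one, smul_smul, mul_comm s ε]
  rw [show mexp ((ε * s) • θ) = NormedSpace.exp ((ε * s) • θ) from rfl, h1,
    Matrix.exp_conj P (s • θ) hP, Matrix.mul_assoc, hPinv', Matrix.mul_one]
  rfl

lemma lamP (θ P : Matrix (Fin 2) (Fin 2) ℝ) (hP : IsUnit P) (ε : ℝ) (hε' : ε * ε = 1)
    (hPθ : P * θ = ε • (θ * P)) (t : ℝ) :
    P * Lam θ t = ε • (Lam θ (ε * t) * P) := by
  have intInt2 : ∀ (i k : Fin 2), IntervalIntegrable (fun s : ℝ => mexp ((ε * s) • θ) i k)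
      MeasureTheory.volume 0 t := fun i k =>
    (((mexp_cont θ i k).comp (continuous_const.mul continuous_id))).intervalIntegrable 0 t
  have key : ∀ k i, ∫ s in (0:ℝ)..t, mexp ((ε * s) • θ) i k
      = ε • ∫ s in (0:ℝ)..(ε * t), mexp (s • θ) i k := by
    intro k i
    have h := intervalIntegral.smul_integral_comp_mul_left
      (a := 0) (b := t) (fun s => mexp (s • θ) i k) ε
    simp only [mul_zero] at h
    calc ∫ s in (0:ℝ)..t, mexp ((ε * s) • θ) i k
        = ε • (ε • ∫ s in (0:ℝ)..t, mexp ((ε * s) • θ) i k) := by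
          rw [smul_smul, hε', one_smul]
      _ = ε • ∫ s in (0:ℝ)..(ε * t), mexp (s • θ) i k := by rw [h]
  ext i j
  simp only [Lam, Matrix.mul_apply, Matrix.of_apply, Matrix.smul_apply, smul_eq_mul]
  simp_rw [← intervalIntegral.integral_const_mul]
  rw [← intervalIntegral.integral_finset_sum (fun k _ =>
        ((mexp_intInt θ k j 0 t).const_mul _))]
  have hsum : ∀ s : ℝ, ∑ x, P i x * mexp (s • θ) x j
      = ∑ x, mexp ((ε * s) • θ) i x * P x j := by
    intro s
    have := mexp_conj θ P hP ε hPθ s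
    have hh : (P * mexp (s • θ)) i j = (mexp ((ε * s) • θ) * P) i j := by rw [this]
    simpa [Matrix.mul_apply] using hh
  rw [intervalIntegral.integral_congr (fun s _ => hsum s)]
  rw [intervalIntegral.integral_finset_sum (fun k _ => ((intInt2 i k).mul_const _))]
  simp_rw [intervalIntegral.integral_mul_const, key, Finset.mul_sum, smul_eq_mul, mul_assoc]

theorem stmt7 (θ A P : Matrix (Fin 2) (Fin 2) ℝ) (hcomm : A * θ = θ * A)
    (ε : ℝ) (hε : ε ^ 2 = 1) (hP : IsUnit P) (hPθ : P * θ = ε • (θ * P))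
    (ξ η : Fin 2 → ℝ) (t : ℝ) (v : Fin 2 → ℝ) :
    P *ᵥ ((P⁻¹ * A * P) *ᵥ v + Lam θ t *ᵥ (P⁻¹ *ᵥ (ε • ξ + A *ᵥ η))) =
      A *ᵥ (P *ᵥ v + ε • (Lam θ (ε * t) *ᵥ η)) + Lam θ (ε * t) *ᵥ ξ := by
  have hdet := (Matrix.isUnit_iff_isUnit_det P).mp hP
  have hPinv : P * P⁻¹ = 1 := Matrix.mul_nonsing_inv P hdet
  have hε' : ε * ε = 1 := by rw [← pow_two]; exact hε
  have hL := lamP θ P hP ε hε' hPθ t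
  have hA := lamA θ A hcomm (ε * t)
  have key1 : P * (P⁻¹ * A * P) = A * P := by
    rw [← Matrix.mul_assoc, ← Matrix.mul_assoc, hPinv, Matrix.one_mul]
  have key2 : ∀ w, P *ᵥ (Lam θ t *ᵥ (P⁻¹ *ᵥ w)) = ε • (Lam θ (ε * t) *ᵥ w) := by
    intro w
    rw [mulVec_mulVec, mulVec_mulVec, hL, Matrix.smul_mul,
      Matrix.mul_assoc, hPinv, Matrix.mul_one, smul_mulVec]
  rw [mulVec_add, mulVec_mulVec, key1, key2]
  simp only [mulVec_add, mulVec_smul, mulVec_mulVec, smul_add]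
  rw [← hA, smul_smul, hε', one_smul]
  abel
end

section
/- Let θ and A be real 2×2 matrices with Aθ = θA and A ≠ 0, let ξ ∈ ℝ², and let n ∈ ℝ² be nonzero, with n^⊥ = {x ∈ ℝ² : ⟨x,n⟩ = 0}. Assume that at least one of the following holds: θ(n^⊥) ⊄ n^⊥, or A(n^⊥) ⊄ n^⊥, or ξ ∉ n^⊥. Then the zero set F⁻¹({0}) ⊆ ℝ × ℝ² is connected, and the sets F⁻¹((−∞,0)) and F⁻¹((0,+∞)) are nonempty, open and connected; in particular, the complement of F⁻¹({0}) in ℝ × ℝ² has exactly two connected components, namely F⁻¹((−∞,0)) and F⁻¹((0,+∞)). -/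
open Matrix

/-- `F(t,v) = ⟨exp(−tθ)(Av + Λ^θ_t ξ), n⟩`. -/
noncomputable def Fu (θ A : Matrix (Fin 2) (Fin 2) ℝ) (ξ n : Fin 2 → ℝ)
    (p : ℝ × (Fin 2 → ℝ)) : ℝ :=
  (mexp ((-p.1) • θ) *ᵥ (A *ᵥ p.2 + Lam θ p.1 *ᵥ ξ)) ⬝ᵥ n

/-! ### Auxiliary lemmas -/

lemma dot_flip (M : Matrix (Fin 2) (Fin 2) ℝ) (x y : Fin 2 → ℝ) :
    (M *ᵥ x) ⬝ᵥ y = x ⬝ᵥ (Mᵀ *ᵥ y) := by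
  rw [dotProduct_comm, dotProduct_mulVec, ← mulVec_transpose, dotProduct_comm]

lemma mexp_transpose (B : Matrix (Fin 2) (Fin 2) ℝ) : (mexp B)ᵀ = mexp Bᵀ :=
  (Matrix.exp_transpose B).symm

section
attribute [local instance] Matrix.linftyOpNormedAddCommGroup Matrix.linftyOpNormedRing
  Matrix.linftyOpNormedAlgebra

lemma mexp_comm {A B : Matrix (Fin 2) (Fin 2) ℝ} (h : A * B = B * A) :
    A * mexp B = mexp B * A := by unfold mexp; exact (Commute.exp_right h).eq

lemma mexp_neg_mul (B : Matrix (Fin 2) (Fin 2) ℝ) : mexp (-B) * mexp B = 1 := by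
  rw [mexp, mexp, ← Matrix.exp_add_of_commute _ _ (Commute.refl B).neg_left,
    neg_add_cancel, NormedSpace.exp_zero]

lemma cont_mexp_elem (B : Matrix (Fin 2) (Fin 2) ℝ) (i j : Fin 2) :
    Continuous fun t : ℝ => mexp (t • B) i j := by
  have h : Continuous fun t : ℝ => mexp (t • B) := by
    unfold mexp
    exact continuous_iff_continuousAt.2 fun t => (hasDerivAt_exp_smul_const B t).continuousAt
  exact h.matrix_elem i j

lemma mexp_mulVec_eig (B : Matrix (Fin 2) (Fin 2) ℝ) (x : Fin 2 → ℝ) (l : ℝ)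
    (h : B *ᵥ x = l • x) : mexp B *ᵥ x = Real.exp l • x := by
  have hpow : ∀ k : ℕ, (B ^ k) *ᵥ x = (l ^ k) • x := by
    intro k
    induction k with
    | zero => simp
    | succ k ih =>
      rw [pow_succ, ← mulVec_mulVec, h, mulVec_smul, ih, smul_smul, pow_succ]
      ring_nf
  let φ : Matrix (Fin 2) (Fin 2) ℝ →ₗ[ℝ] (Fin 2 → ℝ) :=
    { toFun := fun M => M *ᵥ x
      map_add' := fun M N => add_mulVec M N x
      map_smul' := fun c M => smul_mulVec c M x }
  let ψ := LinearMap.toContinuousLinearMap φ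
  have hsum : Summable fun k : ℕ => (k.factorial⁻¹ : ℝ) • B ^ k :=
    NormedSpace.expSeries_summable' B
  have hsumr : Summable fun k : ℕ => (k.factorial⁻¹ : ℝ) • l ^ k :=
    NormedSpace.expSeries_summable' l
  have h1 : mexp B *ᵥ x = ψ (∑' k : ℕ, (k.factorial⁻¹ : ℝ) • B ^ k) := by
    rw [mexp, NormedSpace.exp_eq_tsum ℝ]; rfl
  rw [h1, ψ.map_tsum hsum]
  have h2 : ∀ k : ℕ, ψ ((k.factorial⁻¹ : ℝ) • B ^ k) = ((k.factorial⁻¹ : ℝ) * l ^ k) • x := by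
    intro k
    show (((k.factorial⁻¹ : ℝ) • B ^ k) *ᵥ x) = _
    rw [smul_mulVec, hpow, smul_smul]
  simp_rw [h2]
  rw [Summable.tsum_smul_const]
  · congr 1
    rw [Real.exp_eq_exp_ℝ, NormedSpace.exp_eq_tsum ℝ]
    simp [smul_eq_mul]
  · simpa [smul_eq_mul] using hsumr

end

lemma mexp_mulVec_ne_zero (B : Matrix (Fin 2) (Fin 2) ℝ) {x : Fin 2 → ℝ} (hx : x ≠ 0) :
    mexp B *ᵥ x ≠ 0 := by
  intro h
  apply hx
  have := congrArg (fun y => mexp (-B) *ᵥ y) h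
  simp only [mulVec_mulVec, mexp_neg_mul B, one_mulVec, mulVec_zero] at this
  exact this

lemma cont_mexp_neg_elem (B : Matrix (Fin 2) (Fin 2) ℝ) (i j : Fin 2) :
    Continuous fun t : ℝ => mexp ((-t) • B) i j := by
  have : ∀ t : ℝ, (-t) • B = t • (-B) := fun t => by rw [neg_smul, smul_neg]
  simpa only [this] using cont_mexp_elem (-B) i j

lemma cont_Lam_elem (B : Matrix (Fin 2) (Fin 2) ℝ) (i j : Fin 2) :
    Continuous fun t : ℝ => Lam B t i j := by
  have hc := cont_mexp_elem B i j
  exact intervalIntegral.continuous_primitive (fun a b => (hc.intervalIntegrable a b)) 0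

lemma cont_Fu (θ A : Matrix (Fin 2) (Fin 2) ℝ) (ξ n : Fin 2 → ℝ) :
    Continuous (Fu θ A ξ n) := by
  unfold Fu
  simp only [dotProduct, Matrix.mulVec, Pi.add_apply]
  apply continuous_finset_sum
  intro i _
  apply Continuous.mul _ continuous_const
  apply continuous_finset_sum
  intro j _
  apply Continuous.mul
  · exact (cont_mexp_neg_elem θ i j).comp continuous_fst
  · apply Continuous.add
    · apply continuous_finset_sum
      intro k _
      exact continuous_const.mul ((continuous_apply k).comp continuous_snd)
    · apply continuous_finset_sum
      intro k _
      exact ((cont_Lam_elem θ j k).comp continuous_fst).mul continuous_const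

lemma Fu_eq (θ A : Matrix (Fin 2) (Fin 2) ℝ) (hcomm : A * θ = θ * A) (ξ n : Fin 2 → ℝ)
    (p : ℝ × (Fin 2 → ℝ)) :
    Fu θ A ξ n p = p.2 ⬝ᵥ (mexp ((-p.1) • θᵀ) *ᵥ (Aᵀ *ᵥ n))
      + (Lam θ p.1 *ᵥ ξ) ⬝ᵥ (mexp ((-p.1) • θᵀ) *ᵥ n) := by
  have ht : (mexp ((-p.1) • θ))ᵀ = mexp ((-p.1) • θᵀ) := by
    rw [mexp_transpose, transpose_smul]
  have hc : Aᵀ * ((-p.1) • θᵀ) = ((-p.1) • θᵀ) * Aᵀ := by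
    rw [Matrix.mul_smul, Matrix.smul_mul, ← transpose_mul, ← transpose_mul, hcomm]
  rw [Fu, dot_flip, ht, add_dotProduct, dot_flip]
  congr 2
  rw [mulVec_mulVec, mexp_comm hc, ← mulVec_mulVec]

lemma cross_zero {B : Matrix (Fin 2) (Fin 2) ℝ} {n w : Fin 2 → ℝ} (hB : B ≠ 0)
    (h1 : B *ᵥ n = 0) (h2 : B *ᵥ w = 0) : n 0 * w 1 - n 1 * w 0 = 0 := by
  have hex : ∃ i j, B i j ≠ 0 := by
    by_contra hc
    push_neg at hc
    exact hB (Matrix.ext fun i j => hc i j)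
  obtain ⟨i, j, hij⟩ := hex
  have e1 := congrFun h1 i
  have e2 := congrFun h2 i
  simp [Matrix.mulVec, dotProduct, Fin.sum_univ_two] at e1 e2
  have key : B i j * (n 0 * w 1 - n 1 * w 0) = 0 := by
    fin_cases j <;> simp only [Fin.zero_eta, Fin.mk_one, Fin.isValue] at hij ⊢
    · linear_combination w 1 * e1 - n 1 * e2
    · linear_combination n 0 * e2 - w 0 * e1
  exact (mul_eq_zero.mp key).resolve_left hij

lemma eig_of {n w : Fin 2 → ℝ} (hn : n ≠ 0) (hcross : n 0 * w 1 - n 1 * w 0 = 0) :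
    ∃ l : ℝ, w = l • n := by
  have : n 0 ≠ 0 ∨ n 1 ≠ 0 := by
    by_contra hc
    push_neg at hc
    apply hn
    funext k
    fin_cases k
    · exact hc.1
    · exact hc.2
  rcases this with h0 | h1
  · refine ⟨w 0 / n 0, funext fun k => ?_⟩
    fin_cases k <;> simp <;> field_simp <;> linarith
  · refine ⟨w 1 / n 1, funext fun k => ?_⟩
    fin_cases k <;> simp <;> field_simp <;> linarith

lemma integral_exp_pos {l t : ℝ} (ht : 0 < t) : 0 < ∫ s in (0:ℝ)..t, Real.exp (s * l) := by
  apply intervalIntegral.intervalIntegral_pos_of_pos (f := fun s => Real.exp (s * l))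
  · exact (Real.continuous_exp.comp (continuous_id.mul continuous_const)).intervalIntegrable 0 t
  · exact fun s => Real.exp_pos _
  · exact ht

lemma integral_exp_neg' {l t : ℝ} (ht : t < 0) : (∫ s in (0:ℝ)..t, Real.exp (s * l)) < 0 := by
  rw [intervalIntegral.integral_symm]
  simp only [Left.neg_neg_iff]
  apply intervalIntegral.intervalIntegral_pos_of_pos (f := fun s => Real.exp (s * l))
  · exact (Real.continuous_exp.comp (continuous_id.mul continuous_const)).intervalIntegrable t 0
  · exact fun s => Real.exp_pos _
  · exact ht

lemma Lam_mulVec_dot (θ : Matrix (Fin 2) (Fin 2) ℝ) (ξ n : Fin 2 → ℝ) (t : ℝ) :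
    (Lam θ t *ᵥ ξ) ⬝ᵥ n = ∫ s in (0:ℝ)..t, ((mexp (s • θ) *ᵥ ξ) ⬝ᵥ n) := by
  simp only [Lam, Matrix.mulVec, dotProduct, Matrix.of_apply]
  rw [intervalIntegral.integral_finset_sum]
  · apply Finset.sum_congr rfl
    intro i _
    rw [intervalIntegral.integral_mul_const, intervalIntegral.integral_finset_sum]
    · congr 1
      apply Finset.sum_congr rfl
      intro j _
      rw [intervalIntegral.integral_mul_const]
    · intro j _
      exact ((cont_mexp_elem θ i j).mul continuous_const).intervalIntegrable 0 t
  · intro i _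
    apply Continuous.intervalIntegrable
    exact (continuous_finset_sum _ fun j _ =>
      (cont_mexp_elem θ i j).mul continuous_const).mul continuous_const

lemma comp_lemma {X : Type*} [TopologicalSpace X] {U V S : Set X} (hUo : IsOpen U)
    (hVo : IsOpen V) (hUc : IsConnected U) (hVc : IsConnected V)
    (hS : Sᶜ = U ∪ V) (hd : Disjoint U V) :
    ∀ p ∈ Sᶜ, connectedComponentIn Sᶜ p = U ∨ connectedComponentIn Sᶜ p = V := by
  intro p hp
  have hsub : connectedComponentIn Sᶜ p ⊆ U ∪ V := hS ▸ connectedComponentIn_subset Sᶜ p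
  have hpre : IsPreconnected (connectedComponentIn Sᶜ p) := isPreconnected_connectedComponentIn
  have hmem : p ∈ connectedComponentIn Sᶜ p := mem_connectedComponentIn hp
  rcases (hS ▸ hp : p ∈ U ∪ V) with hpU | hpV
  · left
    apply subset_antisymm
    · exact hpre.subset_left_of_subset_union hUo hVo hd hsub ⟨p, hmem, hpU⟩
    · exact hUc.isPreconnected.subset_connectedComponentIn hpU (hS ▸ Set.subset_union_left)
  · right
    apply subset_antisymm
    · exact hpre.subset_right_of_subset_union hUo hVo hd hsub ⟨p, hmem, hpV⟩
    · exact hVc.isPreconnected.subset_connectedComponentIn hpV (hS ▸ Set.subset_union_right)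

lemma package {X : Type*} [TopologicalSpace X] {f : X → ℝ} (hf : Continuous f)
    (h0 : IsConnected (f ⁻¹' {0})) (hm : IsConnected (f ⁻¹' Set.Iio 0))
    (hp : IsConnected (f ⁻¹' Set.Ioi 0)) :
    IsConnected (f ⁻¹' {0}) ∧
      (IsOpen (f ⁻¹' Set.Iio 0) ∧ IsConnected (f ⁻¹' Set.Iio 0)) ∧
      (IsOpen (f ⁻¹' Set.Ioi 0) ∧ IsConnected (f ⁻¹' Set.Ioi 0)) ∧
      (f ⁻¹' {0})ᶜ = f ⁻¹' Set.Iio 0 ∪ f ⁻¹' Set.Ioi 0 ∧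
      Disjoint (f ⁻¹' Set.Iio 0) (f ⁻¹' Set.Ioi 0) ∧
      ∀ p ∈ (f ⁻¹' {0})ᶜ,
        connectedComponentIn (f ⁻¹' {0})ᶜ p = f ⁻¹' Set.Iio 0 ∨
        connectedComponentIn (f ⁻¹' {0})ᶜ p = f ⁻¹' Set.Ioi 0 := by
  have hom : IsOpen (f ⁻¹' Set.Iio 0) := isOpen_Iio.preimage hf
  have hop : IsOpen (f ⁻¹' Set.Ioi 0) := isOpen_Ioi.preimage hf
  have hU : (f ⁻¹' {0})ᶜ = f ⁻¹' Set.Iio 0 ∪ f ⁻¹' Set.Ioi 0 := by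
    ext p
    simp only [Set.mem_compl_iff, Set.mem_preimage, Set.mem_singleton_iff, Set.mem_union,
      Set.mem_Iio, Set.mem_Ioi]
    exact ne_iff_lt_or_gt
  have hd : Disjoint (f ⁻¹' Set.Iio 0) (f ⁻¹' Set.Ioi 0) := by
    rw [Set.disjoint_left]
    intro p h1 h2
    have h1' : f p < 0 := h1
    have h2' : 0 < f p := h2
    linarith
  exact ⟨h0, ⟨hom, hm⟩, ⟨hop, hp⟩, hU, hd, comp_lemma hom hop hm hp hU hd⟩

theorem stmt15 (θ A : Matrix (Fin 2) (Fin 2) ℝ) (hcomm : A * θ = θ * A) (hA : A ≠ 0)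
    (ξ n : Fin 2 → ℝ) (hn : n ≠ 0)
    (hlarc : (¬ ∀ x : Fin 2 → ℝ, x ⬝ᵥ n = 0 → (θ *ᵥ x) ⬝ᵥ n = 0) ∨
             (¬ ∀ x : Fin 2 → ℝ, x ⬝ᵥ n = 0 → (A *ᵥ x) ⬝ᵥ n = 0) ∨
             ξ ⬝ᵥ n ≠ 0) :
    IsConnected (Fu θ A ξ n ⁻¹' {0}) ∧
      (IsOpen (Fu θ A ξ n ⁻¹' Set.Iio 0) ∧ IsConnected (Fu θ A ξ n ⁻¹' Set.Iio 0)) ∧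
      (IsOpen (Fu θ A ξ n ⁻¹' Set.Ioi 0) ∧ IsConnected (Fu θ A ξ n ⁻¹' Set.Ioi 0)) ∧
      (Fu θ A ξ n ⁻¹' {0})ᶜ = Fu θ A ξ n ⁻¹' Set.Iio 0 ∪ Fu θ A ξ n ⁻¹' Set.Ioi 0 ∧
      Disjoint (Fu θ A ξ n ⁻¹' Set.Iio 0) (Fu θ A ξ n ⁻¹' Set.Ioi 0) ∧
      ∀ p ∈ (Fu θ A ξ n ⁻¹' {0})ᶜ,
        connectedComponentIn (Fu θ A ξ n ⁻¹' {0})ᶜ p = Fu θ A ξ n ⁻¹' Set.Iio 0 ∨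
        connectedComponentIn (Fu θ A ξ n ⁻¹' {0})ᶜ p = Fu θ A ξ n ⁻¹' Set.Ioi 0 := by
  have contFu : Continuous (Fu θ A ξ n) := cont_Fu θ A ξ n
  by_cases hm0 : Aᵀ *ᵥ n = 0
  · -- degenerate case : `Aᵀ n = 0`
    have hAT : Aᵀ ≠ 0 := fun h => hA (by
      have := congrArg Matrix.transpose h
      simpa using this)
    have hATθT : Aᵀ * θᵀ = θᵀ * Aᵀ := by
      rw [← transpose_mul, ← transpose_mul, hcomm]
    have hw : Aᵀ *ᵥ (θᵀ *ᵥ n) = 0 := by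
      rw [mulVec_mulVec, hATθT, ← mulVec_mulVec, hm0, mulVec_zero]
    obtain ⟨l, hl⟩ := eig_of hn (cross_zero hAT hm0 hw)
    -- hl : θᵀ *ᵥ n = l • n
    have hξ : ξ ⬝ᵥ n ≠ 0 := by
      rcases hlarc with h | h | h
      · exact absurd (fun x hx => by
          rw [dot_flip, hl, dotProduct_smul, smul_eq_mul, hx, mul_zero]) h
      · exact absurd (fun x hx => by rw [dot_flip, hm0, dotProduct_zero]) h
      · exact h
    have hFu : ∀ p : ℝ × (Fin 2 → ℝ), Fu θ A ξ n p =
        (Real.exp ((-p.1) * l) * ∫ s in (0:ℝ)..p.1, Real.exp (s * l)) * (ξ ⬝ᵥ n) := by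
      intro p
      rw [Fu_eq θ A hcomm, hm0, mulVec_zero, dotProduct_zero, zero_add]
      have he : mexp ((-p.1) • θᵀ) *ᵥ n = Real.exp ((-p.1) * l) • n :=
        mexp_mulVec_eig _ n _ (by rw [smul_mulVec, hl, smul_smul])
      rw [he, dotProduct_smul, smul_eq_mul, Lam_mulVec_dot]
      have hint : ∀ s : ℝ, (mexp (s • θ) *ᵥ ξ) ⬝ᵥ n = Real.exp (s * l) * (ξ ⬝ᵥ n) := by
        intro s
        have he2 : mexp (s • θᵀ) *ᵥ n = Real.exp (s * l) • n :=
          mexp_mulVec_eig _ n _ (by rw [smul_mulVec, hl, smul_smul])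
        rw [dot_flip, mexp_transpose, transpose_smul, he2, dotProduct_smul, smul_eq_mul]
      rw [intervalIntegral.integral_congr (fun s _ => hint s),
        intervalIntegral.integral_mul_const, mul_assoc]
    set K : ℝ → ℝ := fun t => Real.exp ((-t) * l) * ∫ s in (0:ℝ)..t, Real.exp (s * l) with hKdef
    have hKpos : ∀ t : ℝ, 0 < t → 0 < K t := fun t ht =>
      mul_pos (Real.exp_pos _) (integral_exp_pos ht)
    have hKneg : ∀ t : ℝ, t < 0 → K t < 0 := fun t ht =>
      mul_neg_of_pos_of_neg (Real.exp_pos _) (integral_exp_neg' ht)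
    have hKzero : K 0 = 0 := by simp [hKdef, intervalIntegral.integral_same]
    have hsign : ∀ t : ℝ, (K t = 0 ↔ t = 0) ∧ (K t < 0 ↔ t < 0) ∧ (0 < K t ↔ 0 < t) := by
      intro t
      rcases lt_trichotomy t 0 with h | h | h
      · have := hKneg t h
        exact ⟨⟨fun hh => absurd hh this.ne, fun hh => absurd hh h.ne⟩,
          ⟨fun _ => h, fun _ => this⟩,
          ⟨fun hh => absurd hh (not_lt_of_gt this), fun hh => absurd hh (not_lt_of_gt h)⟩⟩
      · subst h
        simp [hKzero]
      · have := hKpos t h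
        exact ⟨⟨fun hh => absurd hh this.ne', fun hh => absurd hh h.ne'⟩,
          ⟨fun hh => absurd hh (not_lt_of_gt this), fun hh => absurd hh (not_lt_of_gt h)⟩,
          ⟨fun _ => h, fun _ => this⟩⟩
    have prodConn : ∀ s : Set ℝ, IsConnected s →
        IsConnected (s ×ˢ (Set.univ : Set (Fin 2 → ℝ))) := fun s hs =>
      hs.prod isConnected_univ
    have hIio : IsConnected (Set.Iio (0:ℝ)) := ⟨⟨-1, by norm_num⟩, isPreconnected_Iio⟩
    have hIoi : IsConnected (Set.Ioi (0:ℝ)) := ⟨⟨1, by norm_num⟩, isPreconnected_Ioi⟩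
    rcases hξ.lt_or_gt with hd | hd
    · -- ξ ⬝ᵥ n < 0
      have e0 : Fu θ A ξ n ⁻¹' {0} = ({0} : Set ℝ) ×ˢ (Set.univ : Set (Fin 2 → ℝ)) := by
        ext p
        simp only [Set.mem_preimage, Set.mem_singleton_iff, Set.mem_prod, Set.mem_univ,
          and_true, hFu p]
        rw [mul_eq_zero, or_iff_left hd.ne]
        exact (hsign p.1).1
      have em : Fu θ A ξ n ⁻¹' Set.Iio 0 = (Set.Ioi (0:ℝ)) ×ˢ (Set.univ : Set (Fin 2 → ℝ)) := by
        ext p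
        simp only [Set.mem_preimage, Set.mem_Iio, Set.mem_prod, Set.mem_univ, and_true,
          Set.mem_Ioi, hFu p]
        rw [mul_neg_iff]
        constructor
        · rintro (⟨h1, h2⟩ | ⟨h1, h2⟩)
          · exact (hsign p.1).2.2.mp h1
          · exact absurd h2 (not_lt_of_gt hd)
        · intro h
          exact Or.inl ⟨(hsign p.1).2.2.mpr h, hd⟩
      have ep : Fu θ A ξ n ⁻¹' Set.Ioi 0 = (Set.Iio (0:ℝ)) ×ˢ (Set.univ : Set (Fin 2 → ℝ)) := by
        ext p
        simp only [Set.mem_preimage, Set.mem_Ioi, Set.mem_prod, Set.mem_univ, and_true,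
          Set.mem_Iio, hFu p]
        rw [mul_pos_iff]
        constructor
        · rintro (⟨h1, h2⟩ | ⟨h1, h2⟩)
          · exact absurd h2 (not_lt_of_gt hd)
          · exact (hsign p.1).2.1.mp h1
        · intro h
          exact Or.inr ⟨(hsign p.1).2.1.mpr h, hd⟩
      exact package contFu (e0 ▸ prodConn _ isConnected_singleton)
        (em ▸ prodConn _ hIoi) (ep ▸ prodConn _ hIio)
    · -- 0 < ξ ⬝ᵥ n
      have e0 : Fu θ A ξ n ⁻¹' {0} = ({0} : Set ℝ) ×ˢ (Set.univ : Set (Fin 2 → ℝ)) := by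
        ext p
        simp only [Set.mem_preimage, Set.mem_singleton_iff, Set.mem_prod, Set.mem_univ,
          and_true, hFu p]
        rw [mul_eq_zero, or_iff_left hd.ne']
        exact (hsign p.1).1
      have em : Fu θ A ξ n ⁻¹' Set.Iio 0 = (Set.Iio (0:ℝ)) ×ˢ (Set.univ : Set (Fin 2 → ℝ)) := by
        ext p
        simp only [Set.mem_preimage, Set.mem_Iio, Set.mem_prod, Set.mem_univ, and_true, hFu p]
        rw [mul_neg_iff]
        constructor
        · rintro (⟨h1, h2⟩ | ⟨h1, h2⟩)
          · exact absurd h2 (not_lt_of_gt hd)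
          · exact (hsign p.1).2.1.mp h1
        · intro h
          exact Or.inr ⟨(hsign p.1).2.1.mpr h, hd⟩
      have ep : Fu θ A ξ n ⁻¹' Set.Ioi 0 = (Set.Ioi (0:ℝ)) ×ˢ (Set.univ : Set (Fin 2 → ℝ)) := by
        ext p
        simp only [Set.mem_preimage, Set.mem_Ioi, Set.mem_prod, Set.mem_univ, and_true, hFu p]
        rw [mul_pos_iff]
        constructor
        · rintro (⟨h1, h2⟩ | ⟨h1, h2⟩)
          · exact (hsign p.1).2.2.mp h1
          · exact absurd h2 (not_lt_of_gt hd)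
        · intro h
          exact Or.inl ⟨(hsign p.1).2.2.mpr h, hd⟩
      exact package contFu (e0 ▸ prodConn _ isConnected_singleton)
        (em ▸ prodConn _ hIio) (ep ▸ prodConn _ hIoi)
  · -- main case : `Aᵀ n ≠ 0`
    set g : ℝ → (Fin 2 → ℝ) := fun t => mexp ((-t) • θᵀ) *ᵥ (Aᵀ *ᵥ n) with hgdef
    have hg : ∀ t, g t ≠ 0 := fun t => mexp_mulVec_ne_zero _ hm0
    have hgg : ∀ t, 0 < g t ⬝ᵥ g t := by
      intro t
      have hnn : (0:ℝ) ≤ g t ⬝ᵥ g t := Finset.sum_nonneg fun i _ => mul_self_nonneg _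
      rcases hnn.lt_or_eq with h | h
      · exact h
      · exact absurd (dotProduct_self_eq_zero.mp h.symm) (hg t)
    have key : ∀ (t : ℝ) (u : Fin 2 → ℝ) (a : ℝ),
        Fu θ A ξ n (t, u + a • g t) = Fu θ A ξ n (t, u) + a * (g t ⬝ᵥ g t) := by
      intro t u a
      rw [Fu_eq θ A hcomm, Fu_eq θ A hcomm]
      simp only [add_dotProduct, smul_dotProduct, smul_eq_mul]
      ring
    set Ψ : ℝ × (Fin 2 → ℝ) × ℝ → ℝ × (Fin 2 → ℝ) := fun q =>
      (q.1, q.2.1 + ((q.2.2 - Fu θ A ξ n (q.1, q.2.1)) / (g q.1 ⬝ᵥ g q.1)) • g q.1)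
      with hΨdef
    have hΨF : ∀ q, Fu θ A ξ n (Ψ q) = q.2.2 := by
      intro q
      show Fu θ A ξ n (q.1, q.2.1 + _ • g q.1) = q.2.2
      rw [key, div_mul_cancel₀ _ (hgg q.1).ne']
      ring
    have hΨfix : ∀ p : ℝ × (Fin 2 → ℝ), Ψ (p.1, p.2, Fu θ A ξ n p) = p := by
      intro p
      show (p.1, p.2 + _ • g p.1) = p
      rw [sub_self, zero_div, zero_smul, add_zero]
    have hgc : Continuous g := by
      rw [hgdef]
      apply continuous_pi
      intro i
      simp only [Matrix.mulVec, dotProduct]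
      exact continuous_finset_sum _ fun j _ => (cont_mexp_neg_elem θᵀ i j).mul continuous_const
    have hΨc : Continuous Ψ := by
      rw [hΨdef]
      apply Continuous.prodMk continuous_fst
      apply Continuous.add (continuous_fst.comp continuous_snd)
      apply Continuous.fun_smul
      · apply Continuous.div
        · exact (continuous_snd.comp continuous_snd).sub
            (contFu.comp (continuous_fst.prodMk (continuous_fst.comp continuous_snd)))
        · exact ((hgc.comp continuous_fst).dotProduct (hgc.comp continuous_fst))
        · exact fun q => (hgg q.1).ne'
      · exact hgc.comp continuous_fst
    have himage : ∀ s₀ : Set ℝ,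
        Fu θ A ξ n ⁻¹' s₀ = Ψ '' (Set.univ ×ˢ Set.univ ×ˢ s₀) := by
      intro s₀
      ext p
      constructor
      · intro hp
        exact ⟨(p.1, p.2, Fu θ A ξ n p),
          ⟨Set.mem_univ _, Set.mem_univ _, hp⟩, hΨfix p⟩
      · rintro ⟨q, hq, rfl⟩
        show Fu θ A ξ n (Ψ q) ∈ s₀
        rw [hΨF q]
        exact hq.2.2
    have hconn : ∀ s₀ : Set ℝ, IsConnected s₀ → IsConnected (Fu θ A ξ n ⁻¹' s₀) := by
      intro s₀ hs₀
      rw [himage s₀]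
      exact (isConnected_univ.prod (isConnected_univ.prod hs₀)).image _ hΨc.continuousOn
    exact package contFu (hconn _ isConnected_singleton)
      (hconn _ ⟨⟨-1, by norm_num⟩, isPreconnected_Iio⟩)
      (hconn _ ⟨⟨1, by norm_num⟩, isPreconnected_Ioi⟩)
end
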